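/- For every natural number a, the numerical semigroup S(a) satisfies Wilf's inequality: F(S(a)) + 1 ≤ e(S(a))·n(S(a)), where n(S(a)) is the number of elements of S(a) strictly less than F(S(a)), F is the Frobenius number, and e is the embedding dimension (with S(a) = ℕ for a ∈ {0,1,2}, where the inequality holds trivially). -/

import Mathlib

open Pointwise

def S (a : ℕ) : AddSubmonoid ℕ :=
  AddSubmonoid.closure {m : ℕ | ∃ n : ℕ, m = Nat.fib a + Nat.fib n}

/-- The Frobenius number of `S a`, as an integer (equal to `-1` when `S a = ℕ`). -/
noncomputable def Frob (a : ℕ) : ℤ :=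
  sSup {z : ℤ | ∀ m : ℕ, (m : ℤ) = z → m ∉ S a}

/-- The embedding dimension of `S a`: the cardinality of its minimal system of
generators `S* \ (S* + S*)`. -/
noncomputable def e (a : ℕ) : ℕ :=
  (((S a : Set ℕ) \ {0}) \ (((S a : Set ℕ) \ {0}) + ((S a : Set ℕ) \ {0}))).ncard

/-- The number of elements of `S a` strictly below the Frobenius number. -/
noncomputable def nS (a : ℕ) : ℕ :=
  {s : ℕ | s ∈ S a ∧ (s : ℤ) < Frob a}.ncard

section Aux
open Nat
namespace WilfAux


/-- greedy Zeckendorf length -/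
def zg (t : ℕ) : ℕ := (Nat.zeckendorf t).length

@[simp] lemma zg_zero : zg 0 = 0 := by simp [zg]

lemma zg_of_pos {t : ℕ} (ht : 0 < t) :
    zg t = zg (t - fib (greatestFib t)) + 1 := by
  unfold zg
  rw [Nat.zeckendorf_of_pos ht]
  simp [Nat.add_comm]

lemma peel (c u : ℕ) (hu : u < fib (c + 1)) :
    zg (fib (c + 2) + u) = zg u + 1 := by
  have hpos : 0 < fib (c + 2) + u := by
    have : 0 < fib (c + 2) := fib_pos.2 (by omega)
    omega
  have hgf : greatestFib (fib (c + 2) + u) = c + 2 := by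
    have h1 : c + 2 ≤ greatestFib (fib (c + 2) + u) :=
      le_greatestFib.2 (Nat.le_add_right _ _)
    have h2 : greatestFib (fib (c + 2) + u) < c + 3 := by
      rw [greatestFib_lt]
      have : fib (c + 3) = fib (c + 1) + fib (c + 2) := by
        rw [show c + 3 = (c+1) + 2 from rfl, fib_add_two]
      omega
    omega
  unfold zg
  rw [Nat.zeckendorf_of_pos hpos, hgf]
  simp [Nat.add_comm]

lemma zg_le_greatestFib : ∀ t, zg t ≤ greatestFib t / 2 := by
  intro t
  induction t using Nat.strong_induction_on with
  | _ t IH =>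
    rcases Nat.eq_zero_or_pos t with rfl | ht
    · simp
    · have hL2 : 2 ≤ greatestFib t := le_greatestFib.2 (by rw [fib_two]; omega)
      have hfibpos : 0 < fib (greatestFib t) := fib_pos.2 (by omega)
      have hlt : t - fib (greatestFib t) < t := by
        have := fib_greatestFib_le t
        omega
      have hdrop := greatestFib_sub_fib_greatestFib_le_greatestFib (n := t) (by omega)
      have h1 := IH _ hlt
      rw [zg_of_pos ht]
      have : greatestFib (t - fib (greatestFib t)) / 2 ≤ (greatestFib t - 2) / 2 :=
        Nat.div_le_div_right (by omega)
      omega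

lemma zg_lt_fib {t a : ℕ} (h : t < fib a) : zg t ≤ (a - 1) / 2 := by
  have : greatestFib t ≤ a - 1 := by
    have := greatestFib_lt.2 h
    omega
  have := zg_le_greatestFib t
  have : greatestFib t / 2 ≤ (a-1)/2 := Nat.div_le_div_right ‹_›
  omega

/-- zg (fib (c+2) - 1) ≥ (c+1)/2 -/
lemma zg_fib_sub_one : ∀ c, (c + 1) / 2 ≤ zg (fib (c + 2) - 1) := by
  intro c
  induction c using Nat.strong_induction_on with
  | _ c IH =>
    match c with
    | 0 => simp
    | 1 =>
      have : fib 3 - 1 = 1 := by decide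
      rw [this]
      have h1 : zg 1 = 1 := by
        have := peel 0 0 (by decide)
        simpa using this
      omega
    | (d + 2) =>
      have hident : fib (d + 4) - 1 = fib (d + 3) + (fib (d + 2) - 1) := by
        have h1 : fib (d + 4) = fib (d + 2) + fib (d + 3) := fib_add_two
        have h2 : 0 < fib (d + 2) := fib_pos.2 (by omega)
        omega
      rw [hident, show d + 3 = (d+1) + 2 from rfl, peel (d+1) _ (by
        show fib (d + 2) - 1 < fib (d + 2)
        have h2 : 0 < fib (d + 2) := fib_pos.2 (by omega)
        omega)]
      have := IH d (by omega)
      omega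

/-- KEY: zg (fib (p) * fib a - 1) ≥ (a-1)/2 for 2 ≤ p, p + 2 ≤ a -/
lemma key_lemma : ∀ p a, 2 ≤ p → p + 2 ≤ a → (a - 1) / 2 ≤ zg (fib p * fib a - 1) := by
  intro p
  induction p using Nat.strong_induction_on with
  | _ p IH =>
    intro a hp ha
    match p, hp with
    | 2, _ =>
      have : fib 2 * fib a = fib a := by simp [show fib 2 = 1 from rfl]
      rw [this]
      obtain ⟨c, rfl⟩ : ∃ c, a = c + 2 := ⟨a - 2, by omega⟩
      have := zg_fib_sub_one c
      omega
    | 3, _ =>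
      obtain ⟨c, rfl⟩ : ∃ c, a = c + 2 := ⟨a - 2, by omega⟩
      have hident : fib 3 * fib (c + 2) - 1 = fib (c + 3) + (fib c - 1) := by
        have h1 : fib (c + 3) = fib (c + 1) + fib (c + 2) := fib_add_two
        have h2 : fib (c + 2) = fib c + fib (c + 1) := fib_add_two
        have h3 : 0 < fib c := fib_pos.2 (by omega)
        have h30 : fib 3 * fib (c + 2) = 2 * fib (c + 2) := by
          rw [show fib 3 = 2 from rfl]
        omega
      rw [hident, show c + 3 = (c+1)+2 from rfl, peel (c+1) _ (by
        show fib c - 1 < fib (c + 2)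
        have h3 : 0 < fib c := fib_pos.2 (by omega)
        have h2 : fib (c + 2) = fib c + fib (c + 1) := fib_add_two
        have : 0 < fib (c+1) := fib_pos.2 (by omega)
        omega)]
      have hc3 : 3 ≤ c := by omega
      obtain ⟨d, rfl⟩ : ∃ d, c = d + 2 := ⟨c - 2, by omega⟩
      have := zg_fib_sub_one d
      omega
    | (q + 4), _ =>
      -- p = q + 4, recurse to (q+2, a-2)
      obtain ⟨b, rfl⟩ : ∃ b, a = b + 2 := ⟨a - 2, by omega⟩
      -- identity: fib (q+4) * fib (b+2) = fib (q+b+4) + fib (q+2) * fib b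
      have hident : fib (q + 4) * fib (b + 2) = fib (q + b + 4) + fib (q + 2) * fib b := by
        have h1 : fib (q + b + 4) = fib (q + 2) * fib (b + 1) + fib (q + 3) * fib (b + 2) := by
          have := fib_add (q + 2) (b + 1)
          convert this using 2 <;> omega
        have h2 : fib (q + 4) = fib (q + 2) + fib (q + 3) := fib_add_two
        have h3 : fib (b + 2) = fib b + fib (b + 1) := fib_add_two
        nlinarith [h1, h2, h3]
      have hub : fib (q + 2) * fib b ≤ fib (q + b + 3) := by
        have h1 : fib (q + b + 3) = fib (q + 2) * fib b + fib (q + 3) * fib (b + 1) := by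
          have := fib_add (q + 2) b
          convert this using 2 <;> omega
        omega
      have hbigpos : 0 < fib (q + 2) * fib b :=
        Nat.mul_pos (fib_pos.2 (by omega)) (fib_pos.2 (by omega))
      have hrw : fib (q + 4) * fib (b + 2) - 1 = fib (q + b + 4) + (fib (q + 2) * fib b - 1) := by
        omega
      rw [hrw, show q + b + 4 = (q + b + 2) + 2 from rfl, peel (q + b + 2) _ (by
        show fib (q + 2) * fib b - 1 < fib (q + b + 3)
        omega)]
      have hrec := IH (q + 2) (by omega) b (by omega) (by omega)
      have : (b + 1) / 2 ≤ (b - 1) / 2 + 1 := by omega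
      omega

/-- sum of fibs with gaps ≥ 2 and all indices ≥ 2, all < c, is < fib c -/
lemma sum_fib_lt_of_gaps : ∀ (l : List ℕ) (c : ℕ), l.Pairwise (fun a b => b + 2 ≤ a) →
    (∀ x ∈ l, 2 ≤ x) → (∀ x ∈ l, x + 1 ≤ c) → 2 ≤ c → (l.map fib).sum < fib c := by
  intro l
  induction l with
  | nil => intro c _ _ _ hc; simpa using fib_pos.2 (by omega)
  | cons a l IH =>
    intro c hpw h2 hlt hc
    have hpa : ∀ b ∈ l, b + 2 ≤ a := by
      have := List.pairwise_cons.1 hpw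
      exact this.1
    have hpl := (List.pairwise_cons.1 hpw).2
    have ha2 : 2 ≤ a := h2 a (by simp)
    have hac : a + 1 ≤ c := hlt a (by simp)
    match l with
    | [] =>
      simp only [List.map_cons, List.map_nil, List.sum_cons, List.sum_nil, Nat.add_zero]
      exact (fib_lt_fib ha2).2 (by omega)
    | b :: l' =>
      have hb2 : 2 ≤ b := h2 b (by simp)
      have hba : b + 2 ≤ a := hpa b (by simp)
      have ha4 : 4 ≤ a := by omega
      obtain ⟨e, rfl⟩ : ∃ e, a = e + 1 := ⟨a - 1, by omega⟩
      have IH' := IH e hpl (fun x hx => h2 x (by simp [hx]))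
        (fun x hx => by have := hpa x hx; omega) (by omega)
      have hfib : fib (e + 2) = fib e + fib (e + 1) := fib_add_two
      have hmono : fib (e + 2) ≤ fib c := fib_mono (by omega)
      simp only [List.map_cons, List.sum_cons] at IH' ⊢
      omega

lemma map_eta (s : Multiset ℕ) :
    (Multiset.map (fun x => fib x) s).sum = (Multiset.map fib s).sum := rfl

theorem min_rep : ∀ t (s : Multiset ℕ), (s.map fib).sum = t → zg t ≤ Multiset.card s := by
  intro t
  induction t using Nat.strong_induction_on with
  | _ t IHt =>
    suffices H : ∀ μ (s : Multiset ℕ), 2 * Multiset.card s + s.sum ≤ μ →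
        (s.map fib).sum = t → zg t ≤ Multiset.card s by
      intro s hs; exact H _ s le_rfl hs
    intro μ
    induction μ using Nat.strong_induction_on with
    | _ μ IHμ =>
      intro s hμ hsum
      rcases Nat.eq_zero_or_pos t with rfl | ht
      · simp
      have hfib_le : ∀ i ∈ s, fib i ≤ t := by
        intro i hi
        rw [← hsum]
        exact Multiset.single_le_sum (fun x _ => Nat.zero_le x) _
          (Multiset.mem_map_of_mem fib hi)
      set L := greatestFib t with hLdef
      have hL2 : 2 ≤ L := le_greatestFib.2 (by rw [fib_two]; omega)
      have hfibLpos : 0 < fib L := fib_pos.2 (by omega)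
      have hfibLle : fib L ≤ t := fib_greatestFib_le t
      have htlt : t < fib (L + 1) := lt_fib_greatestFib_add_one t
      by_cases hcaseL : ∃ i ∈ s, fib i = fib L
      · obtain ⟨i, hi, hfi⟩ := hcaseL
        have hs' : i ::ₘ s.erase i = s := Multiset.cons_erase hi
        have hsum' : ((s.erase i).map fib).sum = t - fib L := by
          have : ((i ::ₘ s.erase i).map fib).sum = t := by rw [hs']; exact hsum
          simp only [Multiset.map_cons, Multiset.sum_cons, hfi] at this
          omega
        have hrec := IHt (t - fib L) (by omega) (s.erase i) hsum'
        have hzg := zg_of_pos ht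
        rw [← hLdef] at hzg
        rw [hzg]
        have hcard : Multiset.card (s.erase i) = Multiset.card s - 1 :=
          Multiset.card_erase_of_mem hi
        have hcpos : 0 < Multiset.card s := by
          rw [← hs']; simp
        omega
      · push_neg at hcaseL
        -- every index in s: fib i < fib L, i ≤ L - 1, i ≥ ...
        have hidx : ∀ i ∈ s, i + 1 ≤ L ∧ fib i < fib L := by
          intro i hi
          have h1 : fib i < fib (L + 1) := lt_of_le_of_lt (hfib_le i hi) htlt
          have h2 : i < L + 1 := by
            by_contra h
            push_neg at h
            exact absurd (fib_mono h) (by omega)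
          have h3 : fib i ≤ fib L := fib_mono (by omega)
          have h4 : fib i ≠ fib L := hcaseL i hi
          refine ⟨?_, by omega⟩
          rcases Nat.lt_or_ge i L with h | h
          · omega
          · have : i = L := by omega
            subst this
            exact absurd rfl h4
        by_cases h0 : (0 : ℕ) ∈ s
        · -- drop the zero
          have hs' : (0 : ℕ) ::ₘ s.erase 0 = s := Multiset.cons_erase h0
          have hsum' : ((s.erase 0).map fib).sum = t := by
            have : (((0 : ℕ) ::ₘ s.erase 0).map fib).sum = t := by rw [hs']; exact hsum
            simpa using this
          have hcard : Multiset.card s = Multiset.card (s.erase 0) + 1 := by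
            rw [← hs']; simp
          have hsumle : (s.erase 0).sum ≤ s.sum := by
            conv_rhs => rw [← hs']
            simp
          have := IHμ (2 * Multiset.card (s.erase 0) + (s.erase 0).sum) (by omega)
            (s.erase 0) le_rfl hsum'
          omega
        · by_cases hdup : ∃ i ∈ s, i ∈ s.erase i
          · obtain ⟨i, hi, hi2⟩ := hdup
            have hi1 : 1 ≤ i := by
              rcases Nat.eq_zero_or_pos i with rfl | h; exact absurd hi h0; omega
            set s₂ := (s.erase i).erase i with hs₂
            have hd1 : i ::ₘ s.erase i = s := Multiset.cons_erase hi
            have hd2 : i ::ₘ s₂ = s.erase i := Multiset.cons_erase hi2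
            have hsrw : i ::ₘ i ::ₘ s₂ = s := by rw [hd2, hd1]
            have hsum2 : fib i + fib i + (s₂.map fib).sum = t := by
              have : ((i ::ₘ i ::ₘ s₂).map fib).sum = t := by rw [hsrw]; exact hsum
              simpa [add_assoc] using this
            have hcard2 : Multiset.card s = Multiset.card s₂ + 2 := by
              rw [← hsrw]; simp
            have hsumidx : s.sum = i + i + s₂.sum := by
              rw [← hsrw]; simp only [Multiset.sum_cons]; omega
            rcases Nat.lt_or_ge i 2 with hilt | hige
            · -- i = 1 : replace (1,1) by (3)
              have : i = 1 := by omega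
              subst this
              set s' := (3 : ℕ) ::ₘ s₂ with hs'
              have hsum' : (s'.map fib).sum = t := by
                simp only [hs', Multiset.map_cons, Multiset.sum_cons]
                have : fib 3 = 2 := rfl
                have h1 : fib 1 = 1 := rfl
                have heta := map_eta s₂
                omega
              have := IHμ (2 * Multiset.card s' + s'.sum) (by
                  simp only [hs', Multiset.card_cons, Multiset.sum_cons]
                  omega)
                s' le_rfl hsum'
              simp only [hs', Multiset.card_cons] at this
              omega
            · -- i = k+2: replace (i,i) by (i+1, i-2)
              obtain ⟨k, rfl⟩ : ∃ k, i = k + 2 := ⟨i - 2, by omega⟩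
              set s' := (k + 3) ::ₘ k ::ₘ s₂ with hs'
              have hfibeq : fib (k + 3) + fib k = fib (k + 2) + fib (k + 2) := by
                have h1 : fib (k + 3) = fib (k + 1) + fib (k + 2) := fib_add_two
                have h2 : fib (k + 2) = fib k + fib (k + 1) := fib_add_two
                omega
              have hsum' : (s'.map fib).sum = t := by
                simp only [hs', Multiset.map_cons, Multiset.sum_cons]
                have heta := map_eta s₂
                omega
              have := IHμ (2 * Multiset.card s' + s'.sum) (by
                  simp only [hs', Multiset.card_cons, Multiset.sum_cons]
                  omega)
                s' le_rfl hsum'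
              simp only [hs', Multiset.card_cons] at this
              omega
          · by_cases hadj : ∃ i ∈ s, (i + 1) ∈ s.erase i
            · obtain ⟨i, hi, hi2⟩ := hadj
              set s₂ := (s.erase i).erase (i + 1) with hs₂
              have hd1 : i ::ₘ s.erase i = s := Multiset.cons_erase hi
              have hd2 : (i + 1) ::ₘ s₂ = s.erase i := Multiset.cons_erase hi2
              have hsrw : i ::ₘ (i + 1) ::ₘ s₂ = s := by rw [hd2, hd1]
              have hsum2 : fib i + fib (i + 1) + (s₂.map fib).sum = t := by
                have : ((i ::ₘ (i + 1) ::ₘ s₂).map fib).sum = t := by rw [hsrw]; exact hsum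
                simpa [add_assoc] using this
              have hcard2 : Multiset.card s = Multiset.card s₂ + 2 := by
                rw [← hsrw]; simp
              have hsumidx : s.sum = i + (i + 1) + s₂.sum := by
                rw [← hsrw]; simp only [Multiset.sum_cons]; omega
              set s' := (i + 2) ::ₘ s₂ with hs'
              have hsum' : (s'.map fib).sum = t := by
                simp only [hs', Multiset.map_cons, Multiset.sum_cons]
                have : fib (i + 2) = fib i + fib (i + 1) := fib_add_two
                have heta := map_eta s₂
                omega
              have := IHμ (2 * Multiset.card s' + s'.sum) (by
                  simp only [hs', Multiset.card_cons, Multiset.sum_cons]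
                  omega)
                s' le_rfl hsum'
              simp only [hs', Multiset.card_cons] at this
              omega
            · by_cases h13 : (1 : ℕ) ∈ s ∧ (3 : ℕ) ∈ s.erase 1
              · obtain ⟨h1s, h3s⟩ := h13
                set s₂ := (s.erase 1).erase 3 with hs₂
                have hd1 : (1 : ℕ) ::ₘ s.erase 1 = s := Multiset.cons_erase h1s
                have hd2 : (3 : ℕ) ::ₘ s₂ = s.erase 1 := Multiset.cons_erase h3s
                have hsrw : (1 : ℕ) ::ₘ (3 : ℕ) ::ₘ s₂ = s := by rw [hd2, hd1]
                have hsum2 : fib 1 + fib 3 + (s₂.map fib).sum = t := by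
                  have : (((1:ℕ) ::ₘ (3:ℕ) ::ₘ s₂).map fib).sum = t := by rw [hsrw]; exact hsum
                  simpa [add_assoc] using this
                have hcard2 : Multiset.card s = Multiset.card s₂ + 2 := by
                  rw [← hsrw]; simp
                have hsumidx : s.sum = 1 + 3 + s₂.sum := by
                  rw [← hsrw]; simp only [Multiset.sum_cons]; omega
                set s' := (4 : ℕ) ::ₘ s₂ with hs'
                have hsum' : (s'.map fib).sum = t := by
                  simp only [hs', Multiset.map_cons, Multiset.sum_cons]
                  have h4 : fib 4 = 3 := rfl
                  have h1 : fib 1 = 1 := rfl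
                  have h3 : fib 3 = 2 := rfl
                  have heta := map_eta s₂
                  omega
                have := IHμ (2 * Multiset.card s' + s'.sum) (by
                    simp only [hs', Multiset.card_cons, Multiset.sum_cons]
                    omega)
                  s' le_rfl hsum'
                simp only [hs', Multiset.card_cons] at this
                omega
              · -- FINAL: contradiction
                exfalso
                have hne : s ≠ 0 := by
                  intro h; rw [h] at hsum; simp at hsum; omega
                obtain ⟨i₀, hi₀⟩ := Multiset.exists_mem_of_ne_zero hne
                have hL3 : 3 ≤ L := by
                  have h1 : 1 ≤ i₀ := by
                    rcases Nat.eq_zero_or_pos i₀ with rfl | h; exact absurd hi₀ h0; omega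
                  have h2 : 1 ≤ fib i₀ := fib_pos.2 (by omega)
                  have h3 := (hidx i₀ hi₀).2
                  by_contra hc
                  push_neg at hc
                  have hLeq : L = 2 := by omega
                  rw [hLeq] at h3
                  have : fib 2 = 1 := rfl
                  omega
                have hnodup : s.Nodup := by
                  rw [Multiset.nodup_iff_count_le_one]
                  intro x
                  by_contra hc
                  push_neg at hc
                  have hx : x ∈ s := by
                    rw [← Multiset.count_pos]; omega
                  have hx2 : x ∈ s.erase x := by
                    rw [← Multiset.count_pos, Multiset.count_erase_self]; omega
                  exact hdup ⟨x, hx, hx2⟩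
                set F : ℕ → ℕ := fun x => if x = 1 then 2 else x with hF
                have hgapS : ∀ u ∈ s, ∀ v ∈ s, u < v → F u + 2 ≤ F v := by
                  intro u hu v hv huv
                  have hvne : v ≠ u + 1 := by
                    intro h
                    exact hadj ⟨u, hu, by
                      rw [h] at hv
                      exact (Multiset.mem_erase_of_ne (by omega)).2 hv⟩
                  have hv2 : u + 2 ≤ v := by omega
                  have hu1 : 1 ≤ u := by
                    rcases Nat.eq_zero_or_pos u with rfl | h; exact absurd hu h0; omega
                  rcases Nat.eq_or_lt_of_le hu1 with h1 | h2
                  · -- u = 1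
                    have hu' : u = 1 := h1.symm
                    subst hu'
                    have hv3 : v ≠ 3 := by
                      intro h
                      exact h13 ⟨hu, by
                        rw [h] at hv
                        exact (Multiset.mem_erase_of_ne (by omega)).2 hv⟩
                    have h4v : 4 ≤ v := by omega
                    have hFu : F 1 = 2 := by simp [hF]
                    have hFv : F v = v := by simp only [hF]; rw [if_neg (by omega)]
                    omega
                  · have hFu : F u = u := by simp only [hF]; rw [if_neg (by omega)]
                    have hFv : F v = v := by simp only [hF]; rw [if_neg (by omega)]
                    omega
                set s₂ := s.map F with hs₂
                have hinj : ∀ x ∈ s, ∀ y ∈ s, F x = F y → x = y := by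
                  intro x hx y hy hxy
                  by_contra hne'
                  rcases Nat.lt_or_ge x y with h | h
                  · have := hgapS x hx y hy h; omega
                  · have hyx : y < x := by omega
                    have := hgapS y hy x hx hyx; omega
                have hnodup₂ : s₂.Nodup := Multiset.Nodup.map_on hinj hnodup
                have hgap₂ : ∀ x ∈ s₂, ∀ y ∈ s₂, x ≠ y → x + 2 ≤ y ∨ y + 2 ≤ x := by
                  intro x hx y hy hxy
                  obtain ⟨u, hu, rfl⟩ := Multiset.mem_map.1 hx
                  obtain ⟨v, hv, rfl⟩ := Multiset.mem_map.1 hy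
                  have huv : u ≠ v := by intro h; subst h; exact hxy rfl
                  rcases Nat.lt_or_ge u v with h | h
                  · exact Or.inl (hgapS u hu v hv h)
                  · exact Or.inr (hgapS v hv u hu (by omega))
                have htwo₂ : ∀ x ∈ s₂, 2 ≤ x := by
                  intro x hx
                  obtain ⟨u, hu, rfl⟩ := Multiset.mem_map.1 hx
                  have hu1 : 1 ≤ u := by
                    rcases Nat.eq_zero_or_pos u with rfl | h; exact absurd hu h0; omega
                  simp only [hF]
                  split <;> omega
                have hltL₂ : ∀ x ∈ s₂, x + 1 ≤ L := by
                  intro x hx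
                  obtain ⟨u, hu, rfl⟩ := Multiset.mem_map.1 hx
                  have := (hidx u hu).1
                  simp only [hF]
                  split <;> omega
                have hfibF : ∀ u : ℕ, fib (F u) = fib u := by
                  intro u
                  simp only [hF]
                  split
                  · subst ‹u = 1›; rfl
                  · rfl
                have hsum₂ : (s₂.map fib).sum = t := by
                  rw [hs₂, Multiset.map_map]
                  rw [← hsum]
                  congr 1
                  apply Multiset.map_congr rfl
                  intro x _
                  exact hfibF x
                -- sort descending
                set lst := (Multiset.sort s₂ (· ≤ ·)).reverse with hlst
                have hmemlst : ∀ x ∈ lst, x ∈ s₂ := by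
                  intro x hx
                  rw [hlst, List.mem_reverse] at hx
                  rw [← Multiset.mem_sort (r := (· ≤ ·))]
                  exact hx
                have hsorted : (Multiset.sort s₂ (· ≤ ·)).Pairwise (· ≤ ·) :=
                  Multiset.pairwise_sort _ _
                have hnoduplst : lst.Nodup := by
                  rw [hlst, List.nodup_reverse]
                  have : (↑(Multiset.sort s₂ (· ≤ ·)) : Multiset ℕ).Nodup := by
                    rw [Multiset.sort_eq]; exact hnodup₂
                  exact this
                have hpw_ge : lst.Pairwise (fun a b => b ≤ a) := by
                  rw [hlst, List.pairwise_reverse]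
                  exact hsorted
                have hpw_ne : lst.Pairwise (· ≠ ·) := hnoduplst
                have hpw : lst.Pairwise (fun a b => b + 2 ≤ a) := by
                  have hcomb := List.Pairwise.and hpw_ge hpw_ne
                  refine hcomb.imp_of_mem ?_
                  intro a b ha hb hab
                  obtain ⟨hle, hne'⟩ := hab
                  rcases hgap₂ a (hmemlst a ha) b (hmemlst b hb) hne' with h | h
                  · omega
                  · omega
                have hsumlst : (lst.map fib).sum = t := by
                  have h1 : (lst.map fib).sum = (((Multiset.sort s₂ (· ≤ ·)).map fib)).sum := by
                    rw [hlst, List.map_reverse, List.sum_reverse]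
                  have h2 : (↑(Multiset.sort s₂ (· ≤ ·)) : Multiset ℕ) = s₂ :=
                    Multiset.sort_eq _ _
                  have h3 : (((Multiset.sort s₂ (· ≤ ·)).map fib)).sum
                      = ((s₂).map fib).sum := by
                    conv_rhs => rw [← h2]
                    rfl
                  rw [h1, h3, hsum₂]
                have := sum_fib_lt_of_gaps lst L hpw
                  (fun x hx => htwo₂ x (hmemlst x hx))
                  (fun x hx => hltL₂ x (hmemlst x hx)) (by omega)
                omega



lemma mem_S_iff {a x : ℕ} :
    x ∈ S a ↔ ∃ l : List ℕ, x = l.length * fib a + (l.map fib).sum := by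
  constructor
  · intro hx
    induction hx using AddSubmonoid.closure_induction with
    | mem y hy =>
      obtain ⟨n, rfl⟩ := hy
      exact ⟨[n], by simp⟩
    | zero => exact ⟨[], by simp⟩
    | add y z _ _ hy hz =>
      obtain ⟨l₁, rfl⟩ := hy
      obtain ⟨l₂, rfl⟩ := hz
      exact ⟨l₁ ++ l₂, by simp; ring⟩
  · rintro ⟨l, rfl⟩
    induction l with
    | nil => simpa using (S a).zero_mem
    | cons n l IH =>
      have hgen : fib a + fib n ∈ S a := AddSubmonoid.subset_closure ⟨n, rfl⟩
      have := (S a).add_mem hgen IH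
      convert this using 1
      simp [List.length_cons]
      ring

lemma S_of_zg_le {a k s : ℕ} (h : zg s ≤ k) : k * fib a + s ∈ S a := by
  rw [mem_S_iff]
  refine ⟨Nat.zeckendorf s ++ List.replicate (k - zg s) 0, ?_⟩
  have hlen : (Nat.zeckendorf s ++ List.replicate (k - zg s) 0).length = k := by
    simp [zg] at h ⊢
    omega
  have hsum : ((Nat.zeckendorf s ++ List.replicate (k - zg s) 0).map fib).sum = s := by
    simp [List.map_append, List.sum_append, Nat.sum_zeckendorf_fib]
  rw [hlen, hsum]

lemma mem_S_of_ge {a N : ℕ} (ha : 3 ≤ a) (h : (a - 1) / 2 * fib a ≤ N) : N ∈ S a := by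
  have hm : 0 < fib a := fib_pos.2 (by omega)
  have hmod : N % fib a < fib a := Nat.mod_lt _ hm
  have hzg : zg (N % fib a) ≤ (a - 1) / 2 := zg_lt_fib hmod
  have hdiv : (a - 1) / 2 ≤ N / fib a := by
    rw [Nat.le_div_iff_mul_le hm]
    exact h
  have hrep : N = N / fib a * fib a + N % fib a := by
    have h := Nat.div_add_mod N (fib a)
    have h2 : fib a * (N / fib a) = N / fib a * fib a := Nat.mul_comm _ _
    omega
  rw [hrep]
  exact S_of_zg_le (le_trans hzg hdiv)

lemma frob_not_mem {a : ℕ} (ha : 3 ≤ a) : (a - 1) / 2 * fib a - 1 ∉ S a := by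
  set r := (a - 1) / 2 with hr
  set m := fib a with hm
  have hm2 : 2 ≤ m := by
    have : fib 3 ≤ fib a := fib_mono (by omega)
    simpa [hm, show fib 3 = 2 from rfl] using this
  have hr1 : 1 ≤ r := by
    rw [hr]; omega
  have hrm2 : 2 ≤ r * m := by nlinarith
  intro hmem
  rw [mem_S_iff] at hmem
  obtain ⟨l, hl⟩ := hmem
  rw [← hm] at hl
  set k := l.length with hk
  have hkr : k < r := by
    by_contra hc
    push_neg at hc
    have : r * m ≤ k * m := Nat.mul_le_mul_right m hc
    omega
  set j := r - k with hj
  have hj1 : 1 ≤ j := by omega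
  have hsumfib : (l.map fib).sum = j * m - 1 := by
    have h1 : j * m = r * m - k * m := by
      rw [hj, Nat.sub_mul]
    have h2 : k * m ≤ r * m := Nat.mul_le_mul_right m (by omega)
    have h3 : m ≤ j * m := by
      have : 1 * m ≤ j * m := Nat.mul_le_mul_right m hj1
      omega
    omega
  -- rule out k = 0
  rcases Nat.eq_zero_or_pos k with hk0 | hkpos
  · have : l = [] := List.length_eq_zero_iff.1 (by omega)
    subst this
    simp at hsumfib
    have : 2 ≤ j * m := by
      have : 1 * m ≤ j * m := Nat.mul_le_mul_right m hj1
      omega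
    omega
  have hjr : j ≤ r - 1 := by omega
  -- define σ
  set g := greatestFib j with hg
  have hg2 : 2 ≤ g := le_greatestFib.2 (by simpa using hj1)
  have hfg : fib g ≤ j := fib_greatestFib_le j
  have hfg1 : j < fib (g + 1) := lt_fib_greatestFib_add_one j
  set σ := if fib g = j then g else g + 1 with hσ
  have hσ2 : 2 ≤ σ := by rw [hσ]; split <;> omega
  have hfσj : j ≤ fib σ := by
    rw [hσ]; split
    · omega
    · omega
  have hfσ2j : fib σ ≤ 2 * j - 1 := by
    rw [hσ]; split
    · omega
    · have hne : fib g ≠ j := by assumption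
      have hfgj : fib g ≤ j - 1 := by omega
      have h1 : fib (g + 1) = fib (g - 1) + fib g := by
        obtain ⟨g', hg'⟩ : ∃ g', g = g' + 2 := ⟨g - 2, by omega⟩
        rw [hg']
        show fib (g' + 3) = fib (g' + 1) + fib (g' + 2)
        exact fib_add_two
      have h2 : fib (g - 1) ≤ fib g := fib_mono (by omega)
      omega
  have hσa : σ + 2 ≤ a := by
    have h1 : σ ≤ fib σ + 1 := le_fib_add_one σ
    have h2 : 2 * j - 1 ≤ 2 * r - 3 := by omega
    have h3 : 2 * r ≤ a - 1 := by rw [hr]; omega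
    omega
  -- build the multiset
  set ms : Multiset ℕ := (↑l : Multiset ℕ) + Multiset.replicate (fib σ - j) a with hms
  have hcard : Multiset.card ms = k + (fib σ - j) := by
    simp [hms, hk]
  have hmssum : (ms.map fib).sum = fib σ * m - 1 := by
    have h1 : (ms.map fib).sum = (l.map fib).sum + (fib σ - j) * m := by
      simp [hms, Multiset.map_replicate, hm, mul_comm]
    have h2 : (fib σ - j) * m = fib σ * m - j * m := by rw [Nat.sub_mul]
    have h3 : j * m ≤ fib σ * m := Nat.mul_le_mul_right m hfσj
    have h4 : m ≤ j * m := by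
      have : 1 * m ≤ j * m := Nat.mul_le_mul_right m hj1
      omega
    omega
  have hmin := min_rep _ ms hmssum
  have hkey := key_lemma σ a hσ2 hσa
  rw [← hm, ← hr] at hkey
  rw [hcard] at hmin
  omega

/-- generator membership -/
lemma gen_mem {a : ℕ} (n : ℕ) : fib a + fib n ∈ S a :=
  AddSubmonoid.subset_closure ⟨n, rfl⟩

lemma pos_of_mem {a x : ℕ} (hx : x ∈ S a) (hx0 : x ≠ 0) : fib a ≤ x := by
  rw [mem_S_iff] at hx
  obtain ⟨l, rfl⟩ := hx
  rcases l with _ | ⟨n, l'⟩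
  · simp at hx0
  · have : 1 * fib a ≤ (n :: l').length * fib a := by
      apply Nat.mul_le_mul_right
      simp
    omega

lemma fib_mem_S {a : ℕ} (ha : 3 ≤ a) : ∀ d, fib (a + d) ∈ S a := by
  intro d
  induction d using Nat.strong_induction_on with
  | _ d IH =>
    match d with
    | 0 =>
      rw [mem_S_iff]
      exact ⟨[0], by simp⟩
    | 1 =>
      have heq : fib (a + 1) = fib a + fib (a - 1) := by
        obtain ⟨b, rfl⟩ : ∃ b, a = b + 2 := ⟨a - 2, by omega⟩
        show fib (b + 3) = fib (b + 2) + fib (b + 1)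
        rw [show b + 3 = (b + 1) + 2 from rfl, fib_add_two]
        ring
      rw [heq]
      exact gen_mem _
    | (e + 2) =>
      have h1 : fib (a + (e + 2)) = fib (a + e) + fib (a + (e + 1)) := by
        have := fib_add_two (n := a + e)
        rw [show a + (e + 2) = a + e + 2 by omega, show a + (e + 1) = a + e + 1 by omega]; exact this
      rw [h1]
      exact (S a).add_mem (IH e (by omega)) (IH (e + 1) (by omega))

lemma e_eq {a : ℕ} (ha : 3 ≤ a) : e a = a - 1 := by
  classical
  have hm2 : 2 ≤ fib a := by
    have : fib 3 ≤ fib a := fib_mono (by omega)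
    simpa [show fib 3 = 2 from rfl] using this
  set G : Set ℕ := (insert 0 (Set.Icc 2 (a - 1))) with hG
  have key : (((S a : Set ℕ) \ {0}) \ (((S a : Set ℕ) \ {0}) + ((S a : Set ℕ) \ {0})))
      = (fun i => fib a + fib i) '' G := by
    ext x
    constructor
    · rintro ⟨⟨hxS, hx0⟩, hxns⟩
      simp only [SetLike.mem_coe] at hxS
      simp only [Set.mem_singleton_iff] at hx0
      rw [mem_S_iff] at hxS
      obtain ⟨l, rfl⟩ := hxS
      rcases l with _ | ⟨n, l'⟩
      · simp at hx0
      rcases l' with _ | ⟨n', l''⟩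
      · -- single generator: x = fib a + fib n
        have hxval : ([n].length * fib a + (List.map fib [n]).sum) = fib a + fib n := by
          simp
        rw [hxval] at hxns hx0 ⊢
        rcases Nat.lt_or_ge n a with hna | hna
        · -- n ≤ a - 1 : in the image
          rw [Set.mem_image]
          rcases Nat.eq_zero_or_pos n with rfl | hn1
          · exact ⟨0, by simp [hG], rfl⟩
          rcases Nat.eq_or_lt_of_le hn1 with h1 | h2
          · refine ⟨2, by simp [hG]; omega, ?_⟩
            simp [← h1]
          · refine ⟨n, ?_, rfl⟩
            simp only [hG, Set.mem_insert_iff, Set.mem_Icc]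
            right
            omega
        · -- n ≥ a : x is a sum, contradiction
          exfalso
          apply hxns
          rw [Set.mem_add]
          refine ⟨fib a, ⟨?_, ?_⟩, fib n, ⟨?_, ?_⟩, rfl⟩
          · simp only [SetLike.mem_coe]
            rw [mem_S_iff]
            exact ⟨[0], by simp⟩
          · simp only [Set.mem_singleton_iff]
            omega
          · simp only [SetLike.mem_coe]
            have hfn : fib n = fib (a + (n - a)) := by congr 1; omega
            rw [hfn]
            exact fib_mem_S ha _
          · simp only [Set.mem_singleton_iff]
            have : fib a ≤ fib n := fib_mono (by omega)
            omega
      · -- at least two generators : x is a sum, contradiction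
        exfalso
        apply hxns
        rw [Set.mem_add]
        have hx2 : ((n :: n' :: l'').length * fib a + (List.map fib (n :: n' :: l'')).sum)
            = (fib a + fib n) + ((n' :: l'').length * fib a + (List.map fib (n' :: l'')).sum) := by
          simp [List.length_cons]
          ring
        refine ⟨fib a + fib n, ⟨?_, ?_⟩,
          (n' :: l'').length * fib a + (List.map fib (n' :: l'')).sum, ⟨?_, ?_⟩, hx2.symm⟩
        · exact gen_mem n
        · simp only [Set.mem_singleton_iff]
          omega
        · simp only [SetLike.mem_coe]
          rw [mem_S_iff]
          exact ⟨n' :: l'', rfl⟩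
        · simp only [Set.mem_singleton_iff]
          have : 1 * fib a ≤ (n' :: l'').length * fib a := by
            apply Nat.mul_le_mul_right
            simp
          omega
    · rintro ⟨i, hi, rfl⟩
      have hia : i = 0 ∨ (2 ≤ i ∧ i ≤ a - 1) := by
        simpa only [hG, Set.mem_insert_iff, Set.mem_Icc] using hi
      have hfib_lt : fib i < fib a := by
        rcases hia with rfl | ⟨h1, h2⟩
        · simpa using (by omega : 0 < fib a)
        · have h3 : fib i ≤ fib (a - 1) := fib_mono (by omega)
          have h4 : fib (a - 1) < fib a := by
            have := (fib_lt_fib (m := a - 1) (by omega)).2 (by omega : a - 1 < a)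
            exact this
          omega
      refine ⟨⟨?_, ?_⟩, ?_⟩
      · exact gen_mem i
      · show fib a + fib i ∉ {0}
        simp only [Set.mem_singleton_iff]
        omega
      · show fib a + fib i ∉ _
        intro hmem
        rw [Set.mem_add] at hmem
        obtain ⟨y, hy, z, hz, hyz⟩ := hmem
        obtain ⟨hyS, hy0⟩ := hy
        obtain ⟨hzS, hz0⟩ := hz
        simp only [SetLike.mem_coe] at hyS hzS
        simp only [Set.mem_singleton_iff] at hy0 hz0
        have h5 : fib a ≤ y := pos_of_mem hyS hy0
        have h6 : fib a ≤ z := pos_of_mem hzS hz0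
        have hyz' : y + z = fib a + fib i := hyz
        have hfi : fib i < fib a := hfib_lt
        omega
  have hcard : ((fun i => fib a + fib i) '' G).ncard = a - 1 := by
    rw [Set.ncard_image_of_injOn]
    · have hGfin : G = ↑(insert 0 (Finset.Icc 2 (a - 1)) : Finset ℕ) := by
        rw [hG, Finset.coe_insert, Finset.coe_Icc]
      rw [hGfin, Set.ncard_coe_finset,
        Finset.card_insert_of_notMem (by simp), Nat.card_Icc]
      omega
    · intro i hi j hj hij
      simp only [add_right_inj] at hij
      have hia : i = 0 ∨ (2 ≤ i ∧ i ≤ a - 1) := by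
        simpa only [hG, Set.mem_insert_iff, Set.mem_Icc] using hi
      have hja : j = 0 ∨ (2 ≤ j ∧ j ≤ a - 1) := by
        simpa only [hG, Set.mem_insert_iff, Set.mem_Icc] using hj
      rcases hia with rfl | ⟨hi1, hi2⟩ <;> rcases hja with rfl | ⟨hj1, hj2⟩
      · rfl
      · exfalso
        have : 0 < fib j := fib_pos.2 (by omega)
        simp only [fib_zero] at hij
        omega
      · exfalso
        have : 0 < fib i := fib_pos.2 (by omega)
        simp only [fib_zero] at hij
        omega
      · by_contra hne
        rcases Nat.lt_or_ge i j with h | h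
        · have := (fib_lt_fib hi1).2 h
          omega
        · have hji : j < i := by omega
          have := (fib_lt_fib hj1).2 hji
          omega
  unfold e
  rw [key, hcard]

lemma frob_eq {a : ℕ} (ha : 3 ≤ a) :
    Frob a = ((a - 1) / 2 * fib a : ℕ) - 1 := by
  set r := (a - 1) / 2 with hr
  set m := fib a with hm
  have hm2 : 2 ≤ m := by
    have : fib 3 ≤ fib a := fib_mono (by omega)
    simpa [hm, show fib 3 = 2 from rfl] using this
  have hr1 : 1 ≤ r := by rw [hr]; omega
  have hrm2 : 2 ≤ r * m := by nlinarith
  have hmem : ((r * m : ℕ) : ℤ) - 1 ∈ {z : ℤ | ∀ m' : ℕ, (m' : ℤ) = z → m' ∉ S a} := by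
    intro m' hm'
    have : m' = r * m - 1 := by omega
    rw [this]
    exact frob_not_mem ha
  have hub : ∀ z ∈ {z : ℤ | ∀ m' : ℕ, (m' : ℤ) = z → m' ∉ S a},
      z ≤ ((r * m : ℕ) : ℤ) - 1 := by
    intro z hz
    by_contra hc
    push_neg at hc
    have hcast : (2 : ℤ) ≤ ((r * m : ℕ) : ℤ) := by exact_mod_cast hrm2
    have hz0 : 0 ≤ z := by omega
    have hNz : ((z.toNat : ℕ) : ℤ) = z := Int.toNat_of_nonneg hz0
    have hN : r * m ≤ z.toNat := by
      have h1 : ((r * m : ℕ) : ℤ) ≤ ((z.toNat : ℕ) : ℤ) := by omega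
      exact_mod_cast h1
    exact hz z.toNat hNz (mem_S_of_ge ha hN)
  have hA_ne : Set.Nonempty {z : ℤ | ∀ m' : ℕ, (m' : ℤ) = z → m' ∉ S a} := ⟨_, hmem⟩
  have hbdd : BddAbove {z : ℤ | ∀ m' : ℕ, (m' : ℤ) = z → m' ∉ S a} := ⟨_, hub⟩
  unfold Frob
  apply le_antisymm
  · exact csSup_le hA_ne hub
  · exact le_csSup hbdd hmem

lemma nS_set_eq {a : ℕ} (ha : 3 ≤ a) :
    {s : ℕ | s ∈ S a ∧ (s : ℤ) < Frob a}
      = {s : ℕ | s ∈ S a ∧ s + 1 < (a - 1) / 2 * fib a} := by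
  ext s
  simp only [Set.mem_setOf_eq, frob_eq ha]
  constructor
  · rintro ⟨h1, h2⟩
    refine ⟨h1, ?_⟩
    have : (s : ℤ) + 1 < (((a - 1) / 2 * fib a : ℕ) : ℤ) := by omega
    exact_mod_cast this
  · rintro ⟨h1, h2⟩
    refine ⟨h1, ?_⟩
    have : ((s + 1 : ℕ) : ℤ) < (((a - 1) / 2 * fib a : ℕ) : ℤ) := by exact_mod_cast h2
    push_cast at this
    omega

lemma nS_finite_aux {a : ℕ} :
    {s : ℕ | s ∈ S a ∧ s + 1 < (a - 1) / 2 * fib a}.Finite := by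
  apply (Set.finite_Iio ((a - 1) / 2 * fib a)).subset
  intro x hx
  simp only [Set.mem_setOf_eq] at hx
  simp only [Set.mem_Iio]
  omega

lemma nS_ge_one {a : ℕ} (ha : 3 ≤ a) : 1 ≤ nS a := by
  have hm2 : 2 ≤ fib a := by
    have : fib 3 ≤ fib a := fib_mono (by omega)
    simpa [show fib 3 = 2 from rfl] using this
  have hr1 : 1 ≤ (a - 1) / 2 := by omega
  have h0 : (0 : ℕ) ∈ {s : ℕ | s ∈ S a ∧ s + 1 < (a - 1) / 2 * fib a} := by
    refine ⟨(S a).zero_mem, ?_⟩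
    have : 1 * 2 ≤ (a - 1) / 2 * fib a := Nat.mul_le_mul hr1 hm2
    omega
  unfold nS
  rw [nS_set_eq ha]
  have h1 : ({0} : Set ℕ).ncard ≤ _ :=
    Set.ncard_le_ncard (t := {s : ℕ | s ∈ S a ∧ s + 1 < (a - 1) / 2 * fib a})
      (by simpa using h0) nS_finite_aux
  simpa using h1

lemma nS_ge {a : ℕ} (ha : 5 ≤ a) :
    fib (a - 2) + fib (a - 4) + 1 ≤ nS a := by
  classical
  set r := (a - 1) / 2 with hr
  set m := fib a with hm
  have ha3 : 3 ≤ a := by omega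
  have hm2 : 2 ≤ m := by
    have : fib 3 ≤ fib a := fib_mono (by omega)
    simpa [hm, show fib 3 = 2 from rfl] using this
  have hr2 : 2 ≤ r := by rw [hr]; omega
  set B := fib (a - 2) + fib (a - 4) with hB
  have hBm : B + 1 < m := by
    obtain ⟨b, rfl⟩ : ∃ b, a = b + 5 := ⟨a - 5, by omega⟩
    have e1 : fib (b + 5) = fib (b + 3) + fib (b + 4) := fib_add_two
    have e2 : fib (b + 4) = fib (b + 2) + fib (b + 3) := fib_add_two
    have e3 : fib (b + 3) = fib (b + 1) + fib (b + 2) := fib_add_two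
    have e4 : fib (b + 2) = fib b + fib (b + 1) := fib_add_two
    have h1 : 0 < fib (b + 1) := fib_pos.2 (by omega)
    have h2 : 0 < fib (b + 2) := fib_pos.2 (by omega)
    simp only [hB, hm, show b + 5 - 2 = b + 3 from rfl, show b + 5 - 4 = b + 1 from rfl]
    omega
  have hzgB : ∀ s, s < B → zg s ≤ r - 1 := by
    intro s hs
    rcases Nat.lt_or_ge s (fib (a - 2)) with h1 | h1
    · have := zg_lt_fib h1
      rw [hr]
      omega
    · -- s = fib (a-2) + u with u < fib (a-4)
      obtain ⟨b, rfl⟩ : ∃ b, a = b + 5 := ⟨a - 5, by omega⟩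
      simp only [show b + 5 - 2 = b + 3 from rfl, show b + 5 - 4 = b + 1 from rfl] at hs h1 hB ⊢
      obtain ⟨u, rfl⟩ : ∃ u, s = fib (b + 3) + u := ⟨s - fib (b + 3), by omega⟩
      have hu : u < fib (b + 1) := by omega
      have hu2 : u < fib (b + 2) := by
        have : fib (b + 1) ≤ fib (b + 2) := fib_le_fib_succ
        omega
      rw [show b + 3 = (b + 1) + 2 from rfl, peel (b + 1) u hu2]
      have := zg_lt_fib hu
      rw [hr]
      have hq : (b + 1 - 1) / 2 = b / 2 := by omega
      omega
  set U : Finset ℕ :=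
    insert 0 ((Finset.range B).image (fun s => (r - 1) * m + s)) with hU
  have hUsub : (↑U : Set ℕ) ⊆ {s : ℕ | s ∈ S a ∧ s + 1 < r * m} := by
    intro x hx
    simp only [hU, Finset.coe_insert, Set.mem_insert_iff, Finset.coe_image,
      Set.mem_image, Finset.mem_coe, Finset.mem_range] at hx
    rcases hx with rfl | ⟨s, hsB, rfl⟩
    · refine ⟨(S a).zero_mem, ?_⟩
      have : 2 * 2 ≤ r * m := Nat.mul_le_mul hr2 hm2
      omega
    · refine ⟨S_of_zg_le (a := a) ((hzgB s hsB).trans (by omega)), ?_⟩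
      have h2 : (r - 1) * m = r * m - m := by rw [Nat.sub_mul, Nat.one_mul]
      have h3 : 1 * m ≤ r * m := Nat.mul_le_mul_right m (by omega)
      omega
  have hUcard : U.card = B + 1 := by
    rw [hU, Finset.card_insert_of_notMem, Finset.card_image_of_injective _
      (add_right_injective _), Finset.card_range]
    simp only [Finset.mem_image, Finset.mem_range, not_exists]
    intro s _
    have h3 : 1 * m ≤ (r - 1) * m := Nat.mul_le_mul_right m (by omega)
    omega
  unfold nS
  rw [nS_set_eq ha3, show (a - 1) / 2 = r from hr.symm, show fib a = m from hm.symm]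
  calc B + 1 = U.card := hUcard.symm
    _ = (↑U : Set ℕ).ncard := (Set.ncard_coe_finset U).symm
    _ ≤ _ := Set.ncard_le_ncard hUsub (by
        have h := nS_finite_aux (a := a)
        rw [show (a - 1) / 2 = r from hr.symm, show fib a = m from hm.symm] at h
        exact h)



end WilfAux
end Aux

theorem wilf_for_S (a : ℕ) : Frob a + 1 ≤ (e a : ℤ) * (nS a : ℤ) := by
  classical
  rcases Nat.lt_or_ge a 3 with ha | ha
  · -- a ≤ 2 : S a = everything, Frob = -1
    have hall : ∀ N : ℕ, N ∈ S a := by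
      intro N
      have h1 : (1 : ℕ) ∈ S a := by
        interval_cases a
        · exact AddSubmonoid.subset_closure ⟨1, rfl⟩
        · exact AddSubmonoid.subset_closure ⟨0, rfl⟩
        · exact AddSubmonoid.subset_closure ⟨0, rfl⟩
      have h2 : ∀ M : ℕ, (M : ℕ) ∈ S a := by
        intro M
        induction M with
        | zero => exact (S a).zero_mem
        | succ n ih => exact (S a).add_mem ih h1
      exact h2 N
    have hFrob : Frob a = -1 := by
      have hset : {z : ℤ | ∀ m' : ℕ, (m' : ℤ) = z → m' ∉ S a} = {z : ℤ | z < 0} := by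
        ext z
        simp only [Set.mem_setOf_eq]
        constructor
        · intro h
          by_contra hc
          push_neg at hc
          exact h z.toNat (Int.toNat_of_nonneg hc) (hall _)
        · intro hz m' hm'
          exfalso
          omega
      unfold Frob
      rw [hset]
      apply le_antisymm
      · exact csSup_le ⟨-1, by norm_num⟩ (fun z hz => by
          simp only [Set.mem_setOf_eq] at hz; omega)
      · exact le_csSup ⟨0, fun z hz => by
          simp only [Set.mem_setOf_eq] at hz; omega⟩ (by norm_num)
    rw [hFrob]
    simp only [neg_add_cancel]
    positivity
  · have hfe := WilfAux.e_eq ha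
    have hfr := WilfAux.frob_eq ha
    have hm2 : 2 ≤ Nat.fib a := by
      have : Nat.fib 3 ≤ Nat.fib a := Nat.fib_mono (by omega)
      simpa [show Nat.fib 3 = 2 from rfl] using this
    have hr1 : 1 ≤ (a - 1) / 2 := by omega
    have hkey : (a - 1) / 2 * Nat.fib a ≤ (a - 1) * nS a := by
      rcases Nat.lt_or_ge a 5 with ha5 | ha5
      · have h1 := WilfAux.nS_ge_one ha
        have hma : (a - 1) / 2 * Nat.fib a ≤ a - 1 := by
          interval_cases a
          · simp [show Nat.fib 3 = 2 from rfl]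
          · simp [show Nat.fib 4 = 3 from rfl]
        calc (a - 1) / 2 * Nat.fib a ≤ a - 1 := hma
          _ = (a - 1) * 1 := by ring
          _ ≤ (a - 1) * nS a := Nat.mul_le_mul_left _ h1
      · have h1 := WilfAux.nS_ge ha5
        have h2 : Nat.fib a ≤ 2 * (Nat.fib (a - 2) + Nat.fib (a - 4) + 1) := by
          obtain ⟨b, rfl⟩ : ∃ b, a = b + 5 := ⟨a - 5, by omega⟩
          simp only [show b + 5 - 2 = b + 3 from rfl, show b + 5 - 4 = b + 1 from rfl]
          have e1 : Nat.fib (b + 5) = Nat.fib (b + 3) + Nat.fib (b + 4) := Nat.fib_add_two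
          have e2 : Nat.fib (b + 4) = Nat.fib (b + 2) + Nat.fib (b + 3) := Nat.fib_add_two
          have e3 : Nat.fib (b + 2) = Nat.fib b + Nat.fib (b + 1) := Nat.fib_add_two
          have e4 : Nat.fib b ≤ Nat.fib (b + 1) := Nat.fib_le_fib_succ
          omega
        have h3 : 2 * ((a - 1) / 2) ≤ a - 1 := by omega
        calc (a - 1) / 2 * Nat.fib a
            ≤ (a - 1) / 2 * (2 * (Nat.fib (a - 2) + Nat.fib (a - 4) + 1)) :=
              Nat.mul_le_mul_left _ h2
          _ = (2 * ((a - 1) / 2)) * (Nat.fib (a - 2) + Nat.fib (a - 4) + 1) := by ring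
          _ ≤ (a - 1) * (Nat.fib (a - 2) + Nat.fib (a - 4) + 1) :=
              Nat.mul_le_mul_right _ h3
          _ ≤ (a - 1) * nS a := Nat.mul_le_mul_left _ h1
    rw [hfr, hfe]
    have hrm1 : 1 ≤ (a - 1) / 2 * Nat.fib a := by
      have : 1 * 2 ≤ (a - 1) / 2 * Nat.fib a := Nat.mul_le_mul hr1 hm2
      omega
    have hcast : (((a - 1) / 2 * Nat.fib a : ℕ) : ℤ) ≤ ((a - 1 : ℕ) : ℤ) * ((nS a : ℕ) : ℤ) := by
      have := hkey
      push_cast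
      exact_mod_cast this
    omega
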